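/- arXiv:2303.10124 — 2 statements merged into one kernel-verified Lean document; each statement's English description precedes it below -/
import Mathlib

section
/- For all real h, the limit of Owen's T function as the second argument tends to +∞ satisfies lim_{a→∞} T(h, a) = (1 - Φ(|h|))/2, where Φ is the standard normal CDF. -/
open Real MeasureTheory Filter

/-- Owen's T function `T(h,a) = (1/(2π)) ∫₀^a exp(-h²(1+t²)/2)/(1+t²) dt`. -/
noncomputable def OwenT (h a : ℝ) : ℝ :=
  (1 / (2 * Real.pi)) * ∫ t in (0:ℝ)..a, Real.exp (-h^2 * (1 + t^2) / 2) / (1 + t^2)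

/-- Standard normal CDF. -/
noncomputable def Phi (x : ℝ) : ℝ :=
  ∫ t in Set.Iic x, (Real.sqrt (2 * Real.pi))⁻¹ * Real.exp (-t^2 / 2)

section OwenAux

lemma aux_inner_s (k c : ℝ) (hk : 0 < k) :
    ∫ s in (0:ℝ)..c, s * Real.exp (-(k * s^2) / 2) = (1 - Real.exp (-(k * c^2) / 2)) / k := by
  have hderiv : ∀ s ∈ Set.uIcc (0:ℝ) c,
      HasDerivAt (fun s => -Real.exp (-(k * s^2) / 2) / k) (s * Real.exp (-(k * s^2) / 2)) s := by
    intro s _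
    have h1 : HasDerivAt (fun s : ℝ => -(k * s^2) / 2) (-(k * s)) s := by
      have := ((hasDerivAt_pow 2 s).const_mul k).neg.div_const 2
      exact this.congr_deriv (by push_cast; ring)
    have h2 := (h1.exp).neg.div_const k
    refine h2.congr_deriv ?_
    field_simp
  have hcont : IntervalIntegrable (fun s => s * Real.exp (-(k * s^2) / 2)) volume 0 c :=
    (by continuity : Continuous fun s : ℝ => s * Real.exp (-(k * s^2) / 2)).intervalIntegrable _ _
  rw [intervalIntegral.integral_eq_sub_of_hasDerivAt hderiv hcont]
  simp [mul_zero, neg_zero]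
  ring

lemma aux_inner_t (s : ℝ) (hs : 0 < s) :
    ∫ t in Set.Ioi (0:ℝ), s * Real.exp (-((1 + t^2) * s^2) / 2)
      = Real.sqrt (π / 2) * Real.exp (-s^2 / 2) := by
  have h1 : ∀ t : ℝ, s * Real.exp (-((1 + t^2) * s^2) / 2)
      = (s * Real.exp (-s^2/2)) * Real.exp (-(s^2/2) * t^2) := by
    intro t
    rw [mul_assoc, ← Real.exp_add]
    ring_nf
  simp_rw [h1]
  rw [MeasureTheory.integral_const_mul, integral_gaussian_Ioi]
  have hss : Real.sqrt (π / (s^2/2)) = Real.sqrt (π/2) * 2 / s := by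
    rw [show π / (s^2/2) = (π/2) * (2/s)^2 by field_simp,
      Real.sqrt_mul (by positivity), Real.sqrt_sq (by positivity)]
    ring
  rw [hss]
  field_simp

lemma aux_cont (c : ℝ) : Continuous fun t : ℝ => Real.exp (-c^2 * (1 + t^2) / 2) / (1 + t^2) := by
  apply Continuous.div (by continuity) (by continuity)
  intro t; positivity

lemma aux_integrable (c : ℝ) :
    IntegrableOn (fun t => Real.exp (-c^2 * (1 + t^2) / 2) / (1 + t^2)) (Set.Ioi (0:ℝ)) := by
  apply Integrable.mono (integrable_inv_one_add_sq.integrableOn (s := Set.Ioi 0))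
  · exact (aux_cont c).aestronglyMeasurable.restrict
  · filter_upwards with t
    have h1 : (0:ℝ) < 1 + t^2 := by positivity
    rw [Real.norm_eq_abs, Real.norm_eq_abs, abs_of_pos (by positivity), abs_of_pos (by positivity)]
    rw [div_le_iff₀ h1]
    have : Real.exp (-c^2 * (1 + t^2) / 2) ≤ 1 := by
      apply Real.exp_le_one_iff.mpr
      nlinarith [sq_nonneg c, sq_nonneg t]
    calc Real.exp (-c^2 * (1 + t^2) / 2) ≤ 1 := this
      _ = (1 + t^2)⁻¹ * (1 + t^2) := by field_simp

lemma aux_key (c : ℝ) (hc : 0 ≤ c) :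
    ∫ t in Set.Ioi (0:ℝ), Real.exp (-c^2 * (1 + t^2) / 2) / (1 + t^2)
      = π/2 - Real.sqrt (π/2) * ∫ s in (0:ℝ)..c, Real.exp (-s^2/2) := by
  set F : ℝ → ℝ → ℝ := fun t s => s * Real.exp (-((1 + t^2) * s^2) / 2) with hF
  have hFcont : Continuous (Function.uncurry F) := by
    apply Continuous.mul continuous_snd
    apply Real.continuous_exp.comp
    continuity
  have hpos : ∀ t : ℝ, (0:ℝ) < 1 + t^2 := fun t => by positivity
  have hpt : ∀ t : ℝ, Real.exp (-c^2 * (1 + t^2) / 2) / (1 + t^2)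
      = (1 + t^2)⁻¹ - ∫ s in (0:ℝ)..c, F t s := by
    intro t
    rw [hF]
    rw [aux_inner_s (1 + t^2) c (hpos t)]
    rw [show -c^2 * (1 + t^2) / 2 = -((1 + t^2) * c^2) / 2 by ring]
    field_simp
    ring
  have hBint : IntegrableOn (fun t => ∫ s in (0:ℝ)..c, F t s) (Set.Ioi (0:ℝ)) := by
    have : (fun t => ∫ s in (0:ℝ)..c, F t s)
        = fun t => (1 + t^2)⁻¹ - Real.exp (-c^2 * (1 + t^2) / 2) / (1 + t^2) := by
      funext t; rw [hpt t]; ring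
    rw [this]
    exact integrable_inv_one_add_sq.integrableOn.sub (aux_integrable c)
  have hsplit : ∫ t in Set.Ioi (0:ℝ), Real.exp (-c^2 * (1 + t^2) / 2) / (1 + t^2)
      = (∫ t in Set.Ioi (0:ℝ), (1 + t^2)⁻¹) - ∫ t in Set.Ioi (0:ℝ), ∫ s in (0:ℝ)..c, F t s := by
    rw [← MeasureTheory.integral_sub integrable_inv_one_add_sq.integrableOn hBint]
    congr 1; funext t; exact hpt t
  rw [hsplit, integral_Ioi_inv_one_add_sq, Real.arctan_zero, sub_zero]
  congr 1
  have hprod : Integrable (Function.uncurry F)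
      ((volume.restrict (Set.Ioi (0:ℝ))).prod (volume.restrict (Set.Ioc (0:ℝ) c))) := by
    rw [MeasureTheory.integrable_prod_iff hFcont.aestronglyMeasurable]
    constructor
    · filter_upwards with t
      exact (hFcont.comp (Continuous.prodMk_right t)).integrableOn_Ioc
    · apply Integrable.mono (g := fun t : ℝ => (1 + t^2)⁻¹)
        integrable_inv_one_add_sq.integrableOn
      · exact (hFcont.aestronglyMeasurable.norm.integral_prod_right')
      · filter_upwards with t
        simp only [Function.uncurry]
        have heq : ∫ s in Set.Ioc (0:ℝ) c, ‖F t s‖ = ∫ s in Set.Ioc (0:ℝ) c, F t s := by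
          apply MeasureTheory.setIntegral_congr_fun measurableSet_Ioc
          intro s hs
          exact norm_of_nonneg (mul_nonneg hs.1.le (Real.exp_nonneg _))
        have hval : ∫ s in Set.Ioc (0:ℝ) c, F t s
            = (1 - Real.exp (-((1 + t^2) * c^2) / 2)) / (1 + t^2) := by
          rw [← intervalIntegral.integral_of_le hc, hF, aux_inner_s (1 + t^2) c (hpos t)]
        rw [Real.norm_eq_abs, heq, hval, Real.norm_eq_abs,
          abs_of_pos (by positivity : (0:ℝ) < (1 + t^2)⁻¹)]
        have hle1 : Real.exp (-((1 + t^2) * c^2) / 2) ≤ 1 :=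
          Real.exp_le_one_iff.mpr (by nlinarith [sq_nonneg t, sq_nonneg c])
        rw [abs_of_nonneg (div_nonneg (by linarith) (hpos t).le)]
        rw [div_le_iff₀ (hpos t)]
        have h1 : (0:ℝ) < Real.exp (-((1 + t^2) * c^2) / 2) := Real.exp_pos _
        calc 1 - Real.exp (-((1 + t^2) * c^2) / 2) ≤ 1 := by linarith
          _ = (1 + t^2)⁻¹ * (1 + t^2) := by field_simp
  have hBform : ∀ t : ℝ, (∫ s in (0:ℝ)..c, F t s) = ∫ s in Set.Ioc (0:ℝ) c, F t s :=
    fun t => intervalIntegral.integral_of_le hc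
  calc ∫ t in Set.Ioi (0:ℝ), ∫ s in (0:ℝ)..c, F t s
      = ∫ t in Set.Ioi (0:ℝ), ∫ s in Set.Ioc (0:ℝ) c, F t s := by simp_rw [hBform]
    _ = ∫ s in Set.Ioc (0:ℝ) c, ∫ t in Set.Ioi (0:ℝ), F t s :=
        MeasureTheory.integral_integral_swap hprod
    _ = ∫ s in Set.Ioc (0:ℝ) c, Real.sqrt (π/2) * Real.exp (-s^2/2) := by
        apply MeasureTheory.setIntegral_congr_fun measurableSet_Ioc
        intro s hs
        exact aux_inner_t s hs.1
    _ = Real.sqrt (π/2) * ∫ s in (0:ℝ)..c, Real.exp (-s^2/2) := by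
        rw [← intervalIntegral.integral_of_le hc, intervalIntegral.integral_const_mul]

lemma aux_g_integrable : Integrable (fun t : ℝ => (Real.sqrt (2 * π))⁻¹ * Real.exp (-t^2 / 2)) := by
  apply Integrable.const_mul
  have : (fun t : ℝ => Real.exp (-t^2/2)) = fun t : ℝ => Real.exp (-(1/2 : ℝ) * t^2) := by
    funext t; ring_nf
  rw [this]
  exact integrable_exp_neg_mul_sq (by norm_num)

lemma aux_g_total : ∫ t : ℝ, (Real.sqrt (2 * π))⁻¹ * Real.exp (-t^2 / 2) = 1 := by
  rw [MeasureTheory.integral_const_mul]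
  have : (fun t : ℝ => Real.exp (-t^2/2)) = fun t : ℝ => Real.exp (-(1/2 : ℝ) * t^2) := by
    funext t; ring_nf
  rw [this, integral_gaussian]
  rw [show π / (1/2 : ℝ) = 2 * π by ring]
  rw [inv_mul_cancel₀ (by positivity : Real.sqrt (2*π) ≠ 0)]

lemma aux_phi_zero : Phi 0 = 1/2 := by
  have hsym : ∫ t in Set.Iic (0:ℝ), (Real.sqrt (2 * π))⁻¹ * Real.exp (-t^2 / 2)
      = ∫ t in Set.Ioi (0:ℝ), (Real.sqrt (2 * π))⁻¹ * Real.exp (-t^2 / 2) := by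
    rw [show (Set.Iic (0:ℝ)) = Set.Iic (-(0:ℝ)) by norm_num,
      ← integral_comp_neg_Ioi]
    simp
  have := intervalIntegral.integral_Iic_add_Ioi (b := (0:ℝ))
    aux_g_integrable.integrableOn aux_g_integrable.integrableOn
  rw [aux_g_total] at this
  unfold Phi
  rw [hsym] at this ⊢
  linarith

lemma aux_phi (x : ℝ) :
    Phi x = 1/2 + (Real.sqrt (2*π))⁻¹ * ∫ s in (0:ℝ)..x, Real.exp (-s^2/2) := by
  have := intervalIntegral.integral_Iic_sub_Iic (f := fun t : ℝ =>
      (Real.sqrt (2 * π))⁻¹ * Real.exp (-t^2 / 2)) (μ := volume) (a := 0) (b := x)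
    aux_g_integrable.integrableOn aux_g_integrable.integrableOn
  rw [intervalIntegral.integral_const_mul] at this
  have h0 := aux_phi_zero
  unfold Phi at *
  linarith

end OwenAux

/-- `lim_{a→∞} T(h, a) = (1 - Φ(|h|))/2`. -/
theorem stmt_5 (h : ℝ) :
    Tendsto (fun a : ℝ => OwenT h a) atTop (nhds ((1 - Phi |h|) / 2)) := by
  set c := |h| with hc
  have hc0 : 0 ≤ c := abs_nonneg h
  have hh2 : h^2 = c^2 := (sq_abs h).symm
  have htend := MeasureTheory.intervalIntegral_tendsto_integral_Ioi 0
    (aux_integrable c) tendsto_id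
  have hval : ∫ t in Set.Ioi (0:ℝ), Real.exp (-c^2 * (1 + t^2) / 2) / (1 + t^2)
      = π/2 - Real.sqrt (π/2) * ∫ s in (0:ℝ)..c, Real.exp (-s^2/2) := aux_key c hc0
  set I := ∫ s in (0:ℝ)..c, Real.exp (-s^2/2) with hI
  have hOwen : (fun a : ℝ => OwenT h a)
      = fun a : ℝ => (1 / (2 * π)) * ∫ t in (0:ℝ)..a, Real.exp (-c^2 * (1 + t^2) / 2) / (1 + t^2) := by
    funext a; unfold OwenT; rw [hh2]
  rw [hOwen]
  have hlim : (1 - Phi c) / 2 = (1 / (2 * π)) * (π/2 - Real.sqrt (π/2) * I) := by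
    rw [aux_phi c, ← hI]
    have hkey : Real.sqrt (π/2) * Real.sqrt (2*π) = π := by
      rw [← Real.sqrt_mul (by positivity), show π/2 * (2*π) = π^2 by ring,
        Real.sqrt_sq Real.pi_pos.le]
    have h2pi : (0:ℝ) < Real.sqrt (2*π) := by positivity
    have e1 : (Real.sqrt (2*π))⁻¹ = Real.sqrt (π/2) / π := by
      rw [inv_eq_one_div, div_eq_div_iff h2pi.ne' Real.pi_ne_zero, one_mul]
      linarith [hkey]
    rw [e1]
    field_simp
    ring
  rw [hlim, ← hval]
  exact htend.const_mul _
end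

section
/- Fix constants d₃ > L_tr > 0 and consider F(d₁) = (d₃² - L_tr²)/(4 d₁³ (d₃ - d₁)³) on the interval [ (d₃ - L_tr)/2, (d₃ + L_tr)/2 ]. Then F has a unique interior critical point at d₁ = d₃/2, which is a strict minimum, and F attains its maximum on the interval exactly at the two endpoints d₁ = (d₃ ± L_tr)/2, where it takes equal values. -/
open Real Set

private lemma aux_lt (C a b : ℝ) (hC : 0 < C) (ha : 0 < a) (hab : a < b) :
    C / (4 * b^3) < C / (4 * a^3) := by
  apply div_lt_div_of_pos_left hC (by positivity)
  have : a^3 < b^3 := by nlinarith [mul_pos ha (ha.trans hab), mul_pos (ha.trans hab) (ha.trans hab), mul_pos ha ha]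
  linarith

/-- For `d₃ > L_tr > 0` and `F(d₁) = (d₃² - L_tr²)/(4 d₁³ (d₃-d₁)³)` on
`[(d₃-L_tr)/2, (d₃+L_tr)/2]`: the unique interior critical point is `d₁ = d₃/2`,
it is a strict minimum, and `F` attains its maximum exactly at the two endpoints,
where it takes equal values. -/
theorem stmt_10 (d₃ Ltr : ℝ) (hL : 0 < Ltr) (hd : Ltr < d₃) :
    let F : ℝ → ℝ := fun d => (d₃^2 - Ltr^2) / (4 * d^3 * (d₃ - d)^3)
    let lo : ℝ := (d₃ - Ltr) / 2
    let hi : ℝ := (d₃ + Ltr) / 2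
    (∀ d ∈ Ioo lo hi, deriv F d = 0 ↔ d = d₃/2) ∧
    (∀ d ∈ Icc lo hi, d ≠ d₃/2 → F (d₃/2) < F d) ∧
    F lo = F hi ∧
    (∀ d ∈ Icc lo hi, F d ≤ F lo) ∧
    (∀ d ∈ Ioo lo hi, F d < F lo) := by
  intro F lo hi
  have hC : 0 < d₃^2 - Ltr^2 := by nlinarith
  have hlo : 0 < lo := by simp only [lo]; linarith
  have hhi : hi < d₃ := by simp only [hi]; linarith
  -- rewrite F via u
  have hF : ∀ d : ℝ, F d = (d₃^2 - Ltr^2) / (4 * (d * (d₃ - d))^3) := by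
    intro d; simp only [F]; ring_nf
  have hupos : ∀ d ∈ Icc lo hi, 0 < d * (d₃ - d) := by
    intro d hd'
    have h1 : 0 < d := lt_of_lt_of_le hlo hd'.1
    have h2 : 0 < d₃ - d := by have := hd'.2; simp only [hi] at this ⊢; linarith
    positivity
  refine ⟨?_, ?_, ?_, ?_, ?_⟩
  · intro d hd'
    have h1 : 0 < d := lt_of_lt_of_le hlo hd'.1.le
    have h2 : 0 < d₃ - d := by have := hd'.2; simp only [hi] at this; linarith
    have hg : HasDerivAt (fun x : ℝ => 4 * x^3 * (d₃ - x)^3)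
        (4 * (3 * d^2) * (d₃ - d)^3 + 4 * d^3 * (3 * (d₃ - d)^2 * (-1))) d := by
      have h3 : HasDerivAt (fun x : ℝ => 4 * x^3) (4 * (3 * d^2)) d := by
        simpa using (hasDerivAt_pow 3 d).const_mul 4
      have h4 : HasDerivAt (fun x : ℝ => (d₃ - x)^3) (3 * (d₃ - d)^2 * (-1)) d := by
        have := ((hasDerivAt_id d).const_sub d₃).pow 3
        simp at this ⊢; exact this
      have := h3.mul h4
      simp at this ⊢; exact this
    have hgne : 4 * d^3 * (d₃ - d)^3 ≠ 0 := by positivity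
    have hF' : HasDerivAt F ((0 * (4 * d^3 * (d₃ - d)^3) - (d₃^2 - Ltr^2) *
        (4 * (3 * d^2) * (d₃ - d)^3 + 4 * d^3 * (3 * (d₃ - d)^2 * (-1)))) /
        (4 * d^3 * (d₃ - d)^3)^2) d :=
      (hasDerivAt_const d (d₃^2 - Ltr^2)).div hg hgne
    rw [hF'.deriv]
    rw [div_eq_zero_iff]
    constructor
    · rintro (h | h)
      · -- numerator zero
        have : (d₃^2 - Ltr^2) * (12 * d^2 * (d₃ - d)^2) * (d₃ - 2*d) = 0 := by
          nlinarith [h]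
        have h5 : (d₃^2 - Ltr^2) * (12 * d^2 * (d₃ - d)^2) ≠ 0 := ne_of_gt (mul_pos hC (by nlinarith [mul_pos (mul_pos h1 h1) (mul_pos h2 h2)]))
        have := mul_eq_zero.mp this
        rcases this with h6 | h6
        · exact absurd h6 h5
        · linarith
      · exact absurd h (pow_ne_zero 2 hgne)
    · intro h
      left
      rw [h]; ring
  · intro d hd' hne
    rw [hF, hF]
    have hu := hupos d hd'
    apply aux_lt _ _ _ hC hu
    have h1 : d ≠ d₃ / 2 := hne
    have hd1 := hd'.1; have hd2 := hd'.2
    have hsq : 0 < (d - d₃/2)^2 := by have hz := sub_ne_zero.mpr hne; positivity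
    nlinarith [hsq]
  · rw [hF, hF]
    have : lo * (d₃ - lo) = hi * (d₃ - hi) := by simp only [lo, hi]; ring
    rw [this]
  · intro d hd'
    rw [hF, hF]
    have hu := hupos d hd'
    have hulo : lo * (d₃ - lo) ≤ d * (d₃ - d) := by
      have hd1 := hd'.1; have hd2 := hd'.2
      simp only [lo, hi] at hd1 hd2 ⊢
      nlinarith
    rcases eq_or_lt_of_le hulo with h | h
    · rw [h]
    · exact le_of_lt (aux_lt _ _ _ hC (hupos lo ⟨le_refl lo, by simp only [lo, hi]; linarith⟩) h)
  · intro d hd'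
    rw [hF, hF]
    apply aux_lt _ _ _ hC (hupos lo ⟨le_refl lo, by simp only [lo, hi]; linarith⟩)
    have hd1 := hd'.1; have hd2 := hd'.2
    simp only [lo, hi] at hd1 hd2 ⊢
    nlinarith
end
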